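/- Let c = (1+√5)/2. Then for all real x ≥ 0 and all real y ≥ 1, one has (y+1)·y^c + x^c − (y+1)·x ≥ 0. -/

import Mathlib

open Real

private lemma golden_sq {c : ℝ} (hc : c = (1 + Real.sqrt 5) / 2) : c * c = c + 1 := by
  have h5 : Real.sqrt 5 * Real.sqrt 5 = 5 := Real.mul_self_sqrt (by norm_num)
  rw [hc]; nlinarith [h5]

private lemma golden_lb {c : ℝ} (hc : c = (1 + Real.sqrt 5) / 2) : 8/5 ≤ c := by
  have h5 : (11:ℝ)/5 ≤ Real.sqrt 5 := by
    rw [show (11:ℝ)/5 = Real.sqrt ((11/5)^2) by rw [Real.sqrt_sq (by norm_num)]]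
    exact Real.sqrt_le_sqrt (by norm_num)
  rw [hc]; linarith

private lemma key_numeric {c : ℝ} (hc : c = (1 + Real.sqrt 5) / 2) :
    (2:ℝ) ≤ c ^ (2*c - 1) := by
  have hlb := golden_lb hc
  have h1 : ((8:ℝ)/5) ^ ((11:ℝ)/5) ≤ c ^ (2*c - 1) := by
    calc ((8:ℝ)/5) ^ ((11:ℝ)/5) ≤ ((8:ℝ)/5) ^ (2*c - 1) := by
          apply Real.rpow_le_rpow_of_exponent_le (by norm_num); linarith
      _ ≤ c ^ (2*c - 1) := by
          apply Real.rpow_le_rpow (by norm_num) hlb; linarith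
  refine le_trans ?_ h1
  have hpos : (0:ℝ) ≤ ((8:ℝ)/5) ^ ((11:ℝ)/5) := Real.rpow_nonneg (by norm_num) _
  have h5 : ((2:ℝ))^(5:ℕ) ≤ (((8:ℝ)/5) ^ ((11:ℝ)/5))^(5:ℕ) := by
    have heq : (((8:ℝ)/5) ^ ((11:ℝ)/5))^(5:ℕ) = ((8:ℝ)/5)^(11:ℕ) := by
      rw [← Real.rpow_natCast (((8:ℝ)/5) ^ ((11:ℝ)/5)) 5, ← Real.rpow_mul (by norm_num),
        show ((11:ℝ)/5) * ((5:ℕ):ℝ) = ((11:ℕ):ℝ) by norm_num, Real.rpow_natCast]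
    rw [heq]; norm_num
  exact le_of_pow_le_pow_left₀ (by norm_num) hpos h5

set_option maxHeartbeats 1000000 in
/-- with c the golden ratio, Φ_y(x) ≥ 0 for all x ≥ 0, y ≥ 1. -/
theorem Phi_nonneg_of_golden (c : ℝ) (hc : c = (1 + Real.sqrt 5) / 2) :
    ∀ x y : ℝ, 0 ≤ x → 1 ≤ y → (y + 1) * y ^ c + x ^ c - (y + 1) * x ≥ 0 := by
  intro x y hx hy
  have hsq : c * c = c + 1 := golden_sq hc
  have hlb : 8/5 ≤ c := golden_lb hc
  have hc1 : (1:ℝ) < c := by linarith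
  have hcpos : (0:ℝ) < c := by linarith
  have hc0 : (0:ℝ) ≤ c := le_of_lt hcpos
  have hconj : Real.HolderConjugate c (c + 1) := by
    rw [Real.holderConjugate_iff]
    constructor
    · exact hc1
    · field_simp
      nlinarith [hsq]
  have hy0 : (0:ℝ) < y := by linarith
  have hy1 : (0:ℝ) < y + 1 := by linarith
  -- k = c^(c-1)
  set k : ℝ := c ^ (c - 1) with hk
  have hkpos : 0 < k := Real.rpow_pos_of_pos hcpos _
  have hyoung := Real.young_inequality_of_nonneg
    (mul_nonneg (le_of_lt hkpos) hx) (le_of_lt (div_pos hy1 hkpos)) hconj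
  have hkc : k ^ c = c := by
    rw [hk, ← Real.rpow_mul hc0]
    have : (c - 1) * c = 1 := by nlinarith [hsq]
    rw [this, Real.rpow_one]
  have hkc1 : k ^ (c + 1) = c ^ c := by
    rw [hk, ← Real.rpow_mul hc0]
    congr 1
    nlinarith [hsq]
  have hA : (k * x) * ((y + 1) / k) = (y + 1) * x := by
    field_simp
  have hB : (k * x) ^ c = c * x ^ c := by
    rw [Real.mul_rpow (le_of_lt hkpos) hx, hkc]
  have hC : ((y + 1) / k) ^ (c + 1) = (y + 1) ^ (c + 1) / c ^ c := by
    rw [Real.div_rpow (le_of_lt hy1) (le_of_lt hkpos), hkc1]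
  rw [hA, hB, hC] at hyoung
  have hcc : (0:ℝ) < c ^ c := Real.rpow_pos_of_pos hcpos _
  -- Step: (y+1)^(c+1) ≤ c^c * (c+1) * (y+1) * y^c
  have hstep : (y + 1) ^ (c + 1) ≤ c ^ c * (c + 1) * ((y + 1) * y ^ c) := by
    have h1 : (y + 1) ^ (c + 1) = (y + 1) ^ c * (y + 1) := by
      rw [Real.rpow_add hy1, Real.rpow_one]
    have h2 : (y + 1) ^ c ≤ (2 * y) ^ c :=
      Real.rpow_le_rpow (le_of_lt hy1) (by linarith) hc0
    have h3 : (2 * y) ^ c = 2 ^ c * y ^ c :=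
      Real.mul_rpow (by norm_num) (le_of_lt hy0)
    have h4 : (2:ℝ) ^ c ≤ c ^ c * (c + 1) := by
      have hkey := key_numeric hc
      have h5 : (2:ℝ) ^ c ≤ (c ^ (2*c - 1)) ^ c :=
        Real.rpow_le_rpow (by norm_num) hkey hc0
      have e1 : (2*c - 1) * c = c + 2 := by nlinarith [hsq]
      have e2 : c ^ (2:ℝ) = c + 1 := by rw [Real.rpow_two]; nlinarith [hsq]
      have h6 : (c ^ (2*c - 1)) ^ c = c ^ c * (c + 1) := by
        rw [← Real.rpow_mul hc0, e1, Real.rpow_add hcpos, e2]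
      rw [h6] at h5
      exact h5
    have hyc : (0:ℝ) ≤ y ^ c := Real.rpow_nonneg (le_of_lt hy0) _
    calc (y + 1) ^ (c + 1) = (y + 1) ^ c * (y + 1) := h1
      _ ≤ 2 ^ c * y ^ c * (y + 1) := by
          refine mul_le_mul_of_nonneg_right ?_ (le_of_lt hy1)
          rw [← h3]; exact h2
      _ ≤ (c ^ c * (c + 1)) * y ^ c * (y + 1) := by
          refine mul_le_mul_of_nonneg_right (mul_le_mul_of_nonneg_right h4 hyc) (le_of_lt hy1)
      _ = c ^ c * (c + 1) * ((y + 1) * y ^ c) := by ring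
  have hc1pos : (0:ℝ) < c + 1 := by linarith
  have hfinal : (y + 1) * x ≤ x ^ c + (y + 1) * y ^ c := by
    have hdiv : (y + 1) ^ (c + 1) / c ^ c / (c + 1) ≤ (y + 1) * y ^ c := by
      rw [div_div, div_le_iff₀ (by positivity)]
      calc (y + 1) ^ (c + 1) ≤ c ^ c * (c + 1) * ((y + 1) * y ^ c) := hstep
        _ = (y + 1) * y ^ c * (c ^ c * (c + 1)) := by ring
    calc (y + 1) * x ≤ c * x ^ c / c + (y + 1) ^ (c + 1) / c ^ c / (c + 1) := hyoung
      _ = x ^ c + (y + 1) ^ (c + 1) / c ^ c / (c + 1) := by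
          rw [mul_div_assoc]; field_simp
      _ ≤ x ^ c + (y + 1) * y ^ c := by linarith
  linarith
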